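/- Let κ ∈ ℤ and let n be a positive integer. Then K_κ(0; 4n) = 0 if n is not a perfect square, and K_κ(0; 4n) = (1 + i^{−κ})·φ(4n)/2 if n is a perfect square. -/

import Mathlib

/-- The Kronecker symbol at a prime `p`. -/
def kronPrime (a : ℤ) (p : ℕ) : ℤ :=
  if p = 2 then (if a % 2 = 0 then 0 else if a % 8 = 1 ∨ a % 8 = 7 then 1 else -1)
  else jacobiSym a p

/-- The Kronecker symbol `(a/n)`. -/
def kron (a n : ℤ) : ℤ :=
  if n = 0 then (if a = 1 ∨ a = -1 then 1 else 0)
  else (if a < 0 ∧ n < 0 then -1 else 1) *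
    n.natAbs.factorization.prod fun p e => kronPrime a p ^ e

/-- `e2pi r = exp(2πir)`. -/
noncomputable def e2pi (r : ℚ) : ℂ :=
  Complex.exp (2 * Real.pi * Complex.I * (r : ℂ))

/-- `ε_d` for odd `d`: `1` if `d ≡ 1 (mod 4)` and `i` if `d ≡ 3 (mod 4)`. -/
noncomputable def epsd (d : ℕ) : ℂ := if d % 4 = 1 then 1 else Complex.I

/-- The Kloosterman-type sum `K_κ(m; 4c)`. -/
noncomputable def Kl (κ : ℤ) (m : ℤ) (c : ℕ) : ℂ :=
  ∑ d ∈ Finset.filter (fun d => ¬ 2 ∣ d) (Finset.range (4 * c)),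
    epsd d ^ (-κ) * (kron (4 * (c : ℤ)) (d : ℤ) : ℂ) *
      e2pi ((m : ℚ) * (d : ℚ) / (4 * (c : ℚ)))

lemma kron_eq_jacobiSym (a : ℤ) {d : ℕ} (hd : ¬ 2 ∣ d) : kron a (d : ℤ) = jacobiSym a d := by
  have hd0 : d ≠ 0 := by rintro rfl; exact hd ⟨0, rfl⟩
  rw [kron, if_neg (by exact_mod_cast hd0),
    if_neg (by rintro ⟨-, h⟩; omega), one_mul, Int.natAbs_natCast]
  have key := Nat.multiplicative_factorization (fun b => jacobiSym a b)
    (fun x y hxy => by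
      rcases eq_or_ne x 0 with rfl | hx
      · have : y = 1 := Nat.coprime_zero_left y |>.mp hxy
        subst this; simp
      rcases eq_or_ne y 0 with rfl | hy
      · have : x = 1 := Nat.coprime_zero_right x |>.mp hxy
        subst this; simp
      · exact jacobiSym.mul_right' a hx hy)
    (jacobiSym.one_right a) hd0
  rw [key]
  apply Finsupp.prod_congr
  intro p hp
  have hp2 : p ≠ 2 := by
    rintro rfl
    exact hd (Nat.dvd_of_mem_primeFactors (by rwa [← Nat.support_factorization]))
  rw [kronPrime, if_neg hp2, jacobiSym.pow_right]

lemma coprime_of_modeq_one {d m : ℕ} (h : d ≡ 1 [MOD m]) : Nat.Coprime d m := by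
  have : Nat.gcd m d = 1 := by
    rw [Nat.gcd_rec, h, ← Nat.gcd_rec, Nat.gcd_one_right]
  exact Nat.Coprime.symm this

lemma jacobi_modeq_left {b c m : ℕ} (h : b ≡ c [MOD m]) :
    jacobiSym (b : ℤ) m = jacobiSym (c : ℤ) m := by
  apply jacobiSym.mod_left'
  have h' : b % m = c % m := h
  omega

lemma coprime_helper {d M : ℕ} (hodd : ¬ 2 ∣ d)
    (h1 : d ≡ 1 [MOD ordCompl[2] M]) : Nat.Coprime d M := by
  have h2 : Nat.Coprime d (2 ^ M.factorization 2) :=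
    Nat.Coprime.pow_right _ (Nat.coprime_two_right.mpr (Nat.odd_iff.mpr (by omega)))
  have h3 : Nat.Coprime d (ordCompl[2] M) := coprime_of_modeq_one h1
  have := Nat.Coprime.mul_right h2 h3
  rwa [Nat.ordProj_mul_ordCompl_eq_self M 2] at this

lemma exists_jacobi_neg_one_of_squarefree {a : ℤ} (hsf : Squarefree a) (hns : ¬ IsSquare a)
    (M : ℕ) (hM : M ≠ 0) :
    ∃ d : ℕ, ¬ 2 ∣ d ∧ Nat.Coprime d M ∧ jacobiSym a d = -1 := by
  have ha0 : a ≠ 0 := hsf.ne_zero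
  have hA0 : a.natAbs ≠ 0 := Int.natAbs_ne_zero.mpr ha0
  set A := a.natAbs with hA
  set e := A.factorization 2 with he
  set w := ordCompl[2] A with hwdef
  have hw0 : w ≠ 0 := (Nat.ordCompl_pos 2 hA0).ne'
  have hwodd : ¬ 2 ∣ w := Nat.not_dvd_ordCompl Nat.prime_two hA0
  have hAfact : 2 ^ e * w = A := Nat.ordProj_mul_ordCompl_eq_self A 2
  have hsfA : Squarefree A := Int.squarefree_natAbs.mpr hsf
  have he1 : e ≤ 1 := Squarefree.natFactorization_le_one 2 hsfA
  rcases eq_or_lt_of_le (Nat.one_le_iff_ne_zero.mpr hw0) with hw1 | hw1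
  · -- w = 1 : a ∈ {-1, 2, -2}
    have hAval : A = 2 ^ e := by rw [← hAfact, ← hw1, mul_one]
    have haval : a = -1 ∨ a = 2 ∨ a = -2 := by
      interval_cases e
      · have h1 : A = 1 := by simpa using hAval
        rcases Int.natAbs_eq a with h | h
        · exfalso; apply hns; rw [h, ← hA, h1]; exact IsSquare.one
        · left; rw [h, ← hA, h1]; rfl
      · have h2 : A = 2 := by simpa using hAval
        rcases Int.natAbs_eq a with h | h
        · right; left; rw [h, ← hA, h2]; rfl
        · right; right; rw [h, ← hA, h2]; rfl
    set r : ℕ := if a = -1 then 3 else 5 with hr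
    set M' := ordCompl[2] M with hM'
    have hM'odd : ¬ 2 ∣ M' := Nat.not_dvd_ordCompl Nat.prime_two hM
    have hco : Nat.Coprime 8 M' := by
      have : Nat.Coprime 2 M' := Nat.coprime_two_left.mpr (Nat.odd_iff.mpr (by omega))
      exact Nat.Coprime.pow_left 3 this
    obtain ⟨d, hd8, hdM'⟩ := Nat.chineseRemainder hco r 1
    have hd8' : d % 8 = r % 8 := hd8
    have hrval : r = 3 ∨ r = 5 := by rw [hr]; split <;> simp
    have hdodd : ¬ 2 ∣ d := by omega
    refine ⟨d, hdodd, coprime_helper hdodd hdM', ?_⟩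
    have hd4 : d % 4 = r % 4 := by omega
    rcases haval with h | h | h
    · rw [h, jacobiSym.at_neg_one (Nat.odd_iff.mpr (by omega)), ZMod.χ₄_nat_mod_four]
      have : r = 3 := by rw [hr, if_pos h]
      have : d % 4 = 3 := by omega
      rw [this]; decide
    · have hr5 : r = 5 := by rw [hr, if_neg (by rw [h]; decide)]
      rw [h, jacobiSym.at_two (Nat.odd_iff.mpr (by omega)), ZMod.χ₈_nat_mod_eight]
      have : d % 8 = 5 := by omega
      rw [this]; decide
    · have hr5 : r = 5 := by rw [hr, if_neg (by rw [h]; decide)]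
      rw [h, jacobiSym.at_neg_two (Nat.odd_iff.mpr (by omega)),
        ZMod.χ₈'_nat_eq_if_mod_eight]
      have h5 : d % 8 = 5 := by omega
      rw [if_neg (by omega), if_neg (by omega)]
  · -- w > 1
    have hsfw : Squarefree w := hsfA.squarefree_of_dvd (Nat.ordCompl_dvd A 2)
    set q := w.minFac with hq
    have hqp : q.Prime := Nat.minFac_prime (by omega)
    have hqw : q ∣ w := Nat.minFac_dvd w
    have hq2 : q ≠ 2 := by intro h2; rw [h2] at hqw; exact hwodd hqw
    haveI : Fact q.Prime := ⟨hqp⟩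
    have hq0 : q ≠ 0 := hqp.ne_zero
    have hwq0 : w / q ≠ 0 := by
      have := Nat.div_pos (Nat.le_of_dvd (by omega) hqw) hqp.pos
      omega
    have hwfact : q * (w / q) = w := Nat.mul_div_cancel' hqw
    -- nonsquare mod q
    obtain ⟨x, hx⟩ := FiniteField.exists_nonsquare (F := ZMod q)
      (by rw [ZMod.ringChar_zmod_n]; exact hq2)
    have hx0 : x ≠ 0 := by rintro rfl; exact hx ⟨0, by ring⟩
    have hleg : legendreSym q x.val = -1 := by
      rw [legendreSym.eq_neg_one_iff']
      rwa [ZMod.natCast_rightInverse x]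
    -- CRT
    set R := 8 * (w / q) * ordCompl[q] M with hR
    have hcoqR : Nat.Coprime q R := by
      have c8 : Nat.Coprime q 8 := by
        have : Nat.Coprime q 2 := (Nat.coprime_primes hqp Nat.prime_two).mpr hq2
        exact Nat.Coprime.pow_right 3 this
      have cwq : Nat.Coprime q (w / q) := by
        rw [hqp.coprime_iff_not_dvd]
        intro hdvd
        exact hqp.not_isUnit (hsfw q (by rw [← hwfact]; exact mul_dvd_mul_left q hdvd))
      have cOC : Nat.Coprime q (ordCompl[q] M) := Nat.coprime_ordCompl hqp hM
      exact ((c8.mul_right cwq).mul_right cOC)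
    obtain ⟨d, hdq, hdR⟩ := Nat.chineseRemainder hcoqR x.val 1
    have h8R : (8 : ℕ) ∣ R := ⟨(w / q) * ordCompl[q] M, by ring⟩
    have hd8 : d ≡ 1 [MOD 8] := hdR.of_dvd h8R
    have hd8' : d % 8 = 1 := by have : d % 8 = 1 % 8 := hd8; omega
    have hdodd : ¬ 2 ∣ d := by omega
    have hd4 : d % 4 = 1 := by omega
    have hdOdd : Odd d := Nat.odd_iff.mpr (by omega)
    refine ⟨d, hdodd, ?_, ?_⟩
    · -- coprime d M
      have hxvlt : x.val < q := ZMod.val_lt x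
      have hxv0 : x.val ≠ 0 := fun h => hx0 (by rwa [ZMod.val_eq_zero] at h)
      have hqd : ¬ q ∣ d := by
        intro hdvd
        have h1 : d % q = 0 := by omega
        have h2 : d % q = x.val % q := hdq
        rw [Nat.mod_eq_of_lt hxvlt] at h2
        omega
      have c1 : Nat.Coprime d (q ^ M.factorization q) :=
        Nat.Coprime.pow_right _ ((hqp.coprime_iff_not_dvd.mpr hqd).symm)
      have c2 : Nat.Coprime d (ordCompl[q] M) :=
        coprime_of_modeq_one (hdR.of_dvd ⟨8 * (w / q), by ring⟩)
      have := c1.mul_right c2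
      rwa [Nat.ordProj_mul_ordCompl_eq_self M q] at this
    · -- the Jacobi symbol computation
      have hdecomp : a = a.sign * ((2 : ℤ) ^ e * (w : ℤ)) := by
        have : ((2 ^ e * w : ℕ) : ℤ) = (A : ℤ) := by exact_mod_cast hAfact
        push_cast at this
        rw [this, hA, Int.sign_mul_natAbs]
      have hsign : jacobiSym a.sign d = 1 := by
        rcases ha0.lt_or_gt with hlt | hlt
        · rw [Int.sign_eq_neg_one_of_neg hlt, jacobiSym.at_neg_one hdOdd, ZMod.χ₄_nat_mod_four, hd4]; decide
        · rw [Int.sign_eq_one_of_pos hlt, jacobiSym.one_left]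
      have h2d : jacobiSym 2 d = 1 := by
        rw [jacobiSym.at_two hdOdd, ZMod.χ₈_nat_mod_eight, hd8']; decide
      have hwd : jacobiSym (w : ℤ) d = -1 := by
        rw [← jacobiSym.quadratic_reciprocity_one_mod_four hd4 (Nat.odd_iff.mpr (by omega))]
        conv_lhs => rw [← hwfact]
        rw [jacobiSym.mul_right' (d : ℤ) hq0 hwq0]
        have hq' : jacobiSym (d : ℤ) q = -1 := by
          rw [jacobi_modeq_left hdq, ← jacobiSym.legendreSym.to_jacobiSym]
          exact hleg
        have hwq' : jacobiSym (d : ℤ) (w / q) = 1 := by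
          have : d ≡ 1 [MOD w / q] := hdR.of_dvd ⟨8 * ordCompl[q] M, by ring⟩
          rw [jacobi_modeq_left this]
          exact jacobiSym.one_left _
        rw [hq', hwq']; ring
      conv_lhs => rw [hdecomp]
      rw [jacobiSym.mul_left, jacobiSym.mul_left, jacobiSym.pow_left, hsign, h2d, hwd]
      ring

lemma exists_jacobi_neg_one {m : ℤ} (hm : m ≠ 0) (hns : ¬ IsSquare m) :
    ∃ d : ℕ, ¬ 2 ∣ d ∧ Nat.Coprime d (4 * m.natAbs) ∧ jacobiSym m d = -1 := by
  obtain ⟨A, B, hAB, hA⟩ := Nat.sq_mul_squarefree m.natAbs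
  set a : ℤ := m.sign * (A : ℤ) with ha
  have hsgn : m.sign = 1 ∨ m.sign = -1 := by
    rcases hm.lt_or_gt with h | h
    · right; exact Int.sign_eq_neg_one_of_neg h
    · left; exact Int.sign_eq_one_of_pos h
  have hAsf : Squarefree (A : ℤ) := Int.squarefree_natCast.mpr hA
  have hsq : Squarefree a := by
    rcases hsgn with h | h
    · rw [ha, h, one_mul]; exact hAsf
    · rw [ha, h]
      intro x hx
      exact hAsf x (by rwa [neg_one_mul, dvd_neg] at hx)
  have hfact : m = (B : ℤ) ^ 2 * a := by
    have h1 : ((B ^ 2 * A : ℕ) : ℤ) = (m.natAbs : ℤ) := by exact_mod_cast hAB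
    push_cast at h1
    calc m = m.sign * (m.natAbs : ℤ) := (Int.sign_mul_natAbs m).symm
    _ = m.sign * ((B : ℤ) ^ 2 * (A : ℤ)) := by rw [Int.natCast_natAbs, ← h1]
    _ = (B : ℤ) ^ 2 * a := by rw [ha]; ring
  have hnsa : ¬ IsSquare a := by
    rintro ⟨c, hc⟩
    exact hns ⟨(B : ℤ) * c, by rw [hfact, hc]; ring⟩
  have hM0 : 4 * m.natAbs ≠ 0 := by
    have := Int.natAbs_ne_zero.mpr hm; omega
  obtain ⟨d, h1, h2, h3⟩ := exists_jacobi_neg_one_of_squarefree hsq hnsa (4 * m.natAbs) hM0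
  refine ⟨d, h1, h2, ?_⟩
  have hB0 : B ≠ 0 := by
    intro h; rw [h] at hAB; simp at hAB
    exact Int.natAbs_ne_zero.mpr hm hAB.symm
  have hBd : Int.gcd ((B : ℤ)) ((d : ℤ)) = 1 := by
    have hBdvd : B ∣ 4 * m.natAbs := Dvd.dvd.mul_left ⟨B * A, by rw [← hAB]; ring⟩ 4
    have : Nat.Coprime d B := Nat.Coprime.coprime_dvd_right hBdvd h2
    simpa [Int.gcd] using this.symm
  rw [hfact, jacobiSym.mul_left, jacobiSym.sq_one' hBd, h3, one_mul]

lemma sum_jacobi (m : ℤ) (n : ℕ) (hn : 0 < n) (hm : m.natAbs = n) :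
    (∑ d ∈ (Finset.range (4 * n)).filter (fun d => ¬ 2 ∣ d), jacobiSym m d)
      = if IsSquare m then ((4 * n).totient : ℤ) else 0 := by
  have hm0 : m ≠ 0 := by
    intro h; rw [h] at hm; simp at hm; omega
  set N := 4 * n with hN
  haveI : NeZero N := ⟨by omega⟩
  have hNm : 4 * m.natAbs = N := by rw [hm]
  -- Step 1: restrict to d coprime to N
  have step1 : (∑ d ∈ (Finset.range N).filter (fun d => ¬ 2 ∣ d), jacobiSym m d)
      = ∑ d ∈ (Finset.range N).filter (fun d => Nat.Coprime d N), jacobiSym m d := by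
    apply (Finset.sum_subset ?_ ?_).symm
    · intro d hd
      simp only [Finset.mem_filter, Finset.mem_range] at *
      refine ⟨hd.1, fun h2 => ?_⟩
      have : (2 : ℕ) ∣ Nat.gcd d N := Nat.dvd_gcd h2 ⟨2 * n, by omega⟩
      rw [hd.2] at this; omega
    · intro d hd hnd
      simp only [Finset.mem_filter, Finset.mem_range] at hd hnd
      rw [jacobiSym.eq_zero_iff]
      refine ⟨by omega, fun hgcd => ?_⟩
      have hgcd' : Nat.Coprime d n := by
        have : Int.gcd m d = Nat.gcd n d := by rw [Int.gcd, hm, Int.natAbs_natCast]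
        rw [this] at hgcd
        exact Nat.Coprime.symm hgcd
      have h4 : Nat.Coprime d 4 := by
        have h2 : Nat.Coprime d 2 := Nat.coprime_two_right.mpr (Nat.odd_iff.mpr (by omega))
        exact Nat.Coprime.pow_right 2 h2
      exact hnd ⟨hd.1, Nat.Coprime.mul_right h4 hgcd'⟩
  -- Step 2: sum over units of ZMod N
  have step2 : (∑ d ∈ (Finset.range N).filter (fun d => Nat.Coprime d N), jacobiSym m d)
      = ∑ u : (ZMod N)ˣ, jacobiSym m ((u : ZMod N).val) := by
    apply Finset.sum_nbij'
      (i := fun d => if h : Nat.Coprime d N then ZMod.unitOfCoprime d h else 1)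
      (j := fun u => (u : ZMod N).val)
    · intro d hd; exact Finset.mem_univ _
    · intro u _
      simp only [Finset.mem_filter, Finset.mem_range]
      exact ⟨ZMod.val_lt _, ZMod.val_coe_unit_coprime u⟩
    · intro d hd
      simp only [Finset.mem_filter, Finset.mem_range] at hd
      rw [dif_pos hd.2]
      simp [ZMod.coe_unitOfCoprime, ZMod.val_natCast, Nat.mod_eq_of_lt hd.1]
    · intro u _
      rw [dif_pos (ZMod.val_coe_unit_coprime u)]
      ext
      simp [ZMod.coe_unitOfCoprime, ZMod.natCast_val, ZMod.cast_id]
    · intro d hd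
      simp only [Finset.mem_filter, Finset.mem_range] at hd
      rw [dif_pos hd.2]
      simp [ZMod.coe_unitOfCoprime, ZMod.val_natCast, Nat.mod_eq_of_lt hd.1]
  -- facts about unit values
  have hval_odd : ∀ u : (ZMod N)ˣ, ¬ 2 ∣ (u : ZMod N).val := by
    intro u h2
    have hco := ZMod.val_coe_unit_coprime u
    have : (2 : ℕ) ∣ Nat.gcd (u : ZMod N).val N := Nat.dvd_gcd h2 ⟨2 * n, by omega⟩
    rw [hco] at this; omega
  rw [step1, step2]
  by_cases hsq : IsSquare m
  · rw [if_pos hsq]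
    obtain ⟨c, hc⟩ := hsq
    have hterm : ∀ u : (ZMod N)ˣ, jacobiSym m ((u : ZMod N).val) = 1 := by
      intro u
      set k : ℕ := (u : ZMod N).val with hk
      have hcd : Int.gcd c (k : ℤ) = 1 := by
        have h1 : c.natAbs ∣ m.natAbs := Int.natAbs_dvd_natAbs.mpr ⟨c, hc⟩
        have h2 : m.natAbs ∣ N := by rw [hm]; exact ⟨4, by ring⟩
        have := Nat.Coprime.coprime_dvd_right (h1.trans h2) (ZMod.val_coe_unit_coprime u)
        simpa [Int.gcd] using this.symm
      rw [hc, ← sq, jacobiSym.sq_one' hcd]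
    rw [Finset.sum_congr rfl (fun u _ => hterm u)]
    simp [Finset.card_univ, ZMod.card_units_eq_totient]
  · rw [if_neg hsq]
    obtain ⟨g', hg1, hg2, hg3⟩ := exists_jacobi_neg_one hm0 hsq
    rw [hNm] at hg2
    set g : (ZMod N)ˣ := ZMod.unitOfCoprime g' hg2 with hg
    have hgval : jacobiSym m ((g : ZMod N).val) = -1 := by
      have h1 : ((g : ZMod N).val) = g' % N := by
        rw [hg, ZMod.coe_unitOfCoprime, ZMod.val_natCast]
      rw [h1, ← hNm, ← jacobiSym.mod_right m (Nat.odd_iff.mpr (by omega))]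
      exact hg3
    have hmul : ∀ u v : (ZMod N)ˣ,
        jacobiSym m (((u * v : (ZMod N)ˣ) : ZMod N).val)
          = jacobiSym m ((u : ZMod N).val) * jacobiSym m ((v : ZMod N).val) := by
      intro u v
      have hoddu := hval_odd u
      have hoddv := hval_odd v
      have hvmul : ((u * v : (ZMod N)ˣ) : ZMod N).val
          = ((u : ZMod N).val * (v : ZMod N).val) % N := by
        rw [Units.val_mul, ZMod.val_mul]
      have hoddprod : Odd ((u : ZMod N).val * (v : ZMod N).val) :=
        (Nat.odd_iff.mpr (by omega)).mul (Nat.odd_iff.mpr (by omega))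
      have hmr := jacobiSym.mod_right m hoddprod
      rw [hNm] at hmr
      rw [hvmul, ← hmr, jacobiSym.mul_right' m (by omega) (by omega)]
    set T := ∑ u : (ZMod N)ˣ, jacobiSym m ((u : ZMod N).val) with hT
    have key : T = -T := by
      calc T = ∑ u : (ZMod N)ˣ, jacobiSym m (((g * u : (ZMod N)ˣ) : ZMod N).val) :=
            (Fintype.sum_bijective (fun u => g * u) (Group.mulLeft_bijective g)
              _ (fun u => jacobiSym m ((u : ZMod N).val)) (fun u => rfl)).symm
      _ = ∑ u : (ZMod N)ˣ, -jacobiSym m ((u : ZMod N).val) := by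
            apply Finset.sum_congr rfl
            intro u _
            rw [hmul, hgval]; ring
      _ = -T := by rw [hT, Finset.sum_neg_distrib]
    omega


/-- `K_κ(0;4n)` vanishes unless `n` is a square, in which case it equals
`(1 + i^{-κ}) φ(4n)/2`. -/
theorem kloosterman_at_zero (κ : ℤ) (n : ℕ) (hn : 0 < n) :
    (¬ IsSquare n → Kl κ 0 n = 0) ∧
    (IsSquare n → Kl κ 0 n = (1 + Complex.I ^ (-κ)) * (Nat.totient (4 * n) : ℂ) / 2) := by
  have hterm : ∀ d ∈ (Finset.range (4 * n)).filter (fun d => ¬ 2 ∣ d),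
      epsd d ^ (-κ) * (kron (4 * (n : ℤ)) (d : ℤ) : ℂ) *
        e2pi (((0 : ℤ) : ℚ) * (d : ℚ) / (4 * (n : ℚ)))
      = ((1 + Complex.I ^ (-κ)) / 2) * ((jacobiSym (n : ℤ) d : ℤ) : ℂ)
        + ((1 - Complex.I ^ (-κ)) / 2) * ((jacobiSym (-(n : ℤ)) d : ℤ) : ℂ) := by
    intro d hd
    rw [Finset.mem_filter] at hd
    obtain ⟨-, hodd⟩ := hd
    have hOdd : Odd d := Nat.odd_iff.mpr (by omega)
    have he : e2pi (((0 : ℤ) : ℚ) * (d : ℚ) / (4 * (n : ℚ))) = 1 := by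
      norm_num [e2pi]
    have hkron : (kron (4 * (n : ℤ)) (d : ℤ)) = jacobiSym (n : ℤ) d := by
      rw [kron_eq_jacobiSym _ hodd]
      have h4 : (4 * (n : ℤ)) = (2 : ℤ) ^ 2 * n := by ring
      have hg : Int.gcd (2 : ℤ) (d : ℤ) = 1 := by
        simpa [Int.gcd] using (Nat.coprime_two_left.mpr hOdd)
      rw [h4, jacobiSym.mul_left, jacobiSym.sq_one' hg, one_mul]
    have hneg : jacobiSym (-(n : ℤ)) d = ZMod.χ₄ d * jacobiSym (n : ℤ) d :=
      jacobiSym.neg _ hOdd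
    rcases (by omega : d % 4 = 1 ∨ d % 4 = 3) with h4 | h4
    · have hχ : ZMod.χ₄ (d : ZMod 4) = 1 := by rw [ZMod.χ₄_nat_mod_four, h4]; decide
      rw [hχ, one_mul] at hneg
      have heps : epsd d = 1 := by rw [epsd, if_pos h4]
      rw [he, hkron, hneg, heps, one_zpow]
      ring
    · have hχ : ZMod.χ₄ (d : ZMod 4) = -1 := by rw [ZMod.χ₄_nat_mod_four, h4]; decide
      rw [hχ, neg_one_mul] at hneg
      have heps : epsd d = Complex.I := by rw [epsd, if_neg (by omega)]
      rw [he, hkron, hneg, heps]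
      push_cast
      ring
  have hsum : Kl κ 0 n
      = ((1 + Complex.I ^ (-κ)) / 2)
          * ((∑ d ∈ (Finset.range (4 * n)).filter (fun d => ¬ 2 ∣ d), jacobiSym (n : ℤ) d : ℤ) : ℂ)
        + ((1 - Complex.I ^ (-κ)) / 2)
          * ((∑ d ∈ (Finset.range (4 * n)).filter (fun d => ¬ 2 ∣ d), jacobiSym (-(n : ℤ)) d : ℤ) : ℂ) := by
    simp only [Kl]
    rw [Finset.sum_congr rfl hterm, Finset.sum_add_distrib, ← Finset.mul_sum, ← Finset.mul_sum]
    push_cast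
    ring
  have hns' : ¬ IsSquare (-(n : ℤ)) := by
    rintro ⟨r, hr⟩
    have h0 : (0 : ℤ) < n := by exact_mod_cast hn
    nlinarith [mul_self_nonneg r]
  have hsum1 := sum_jacobi (n : ℤ) n hn (by simp)
  have hsum2 := sum_jacobi (-(n : ℤ)) n hn (by simp)
  rw [if_neg hns'] at hsum2
  constructor
  · intro hns
    rw [if_neg (fun h => hns (Int.isSquare_natCast_iff.mp h))] at hsum1
    rw [hsum, hsum1, hsum2]
    simp
  · intro hs
    rw [if_pos (Int.isSquare_natCast_iff.mpr hs)] at hsum1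
    rw [hsum, hsum1, hsum2]
    push_cast
    ring
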